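/- Let j be a translational covariant discrete vector field on the two-dimensional discrete torus V_N = (ZMod N)². Then there exist real-valued functions h, g, C¹, C² of the configuration such that for every configuration η and every x ∈ V_N: j_η(x, x+e¹) = τ_{x+e¹}h(η) − τ_x h(η) + τ_x g(η) − τ_{x−e²} g(η) + C¹(η) and j_η(x, x+e²) = τ_{x+e²}h(η) − τ_x h(η) + τ_{x−e¹} g(η) − τ_x g(η) + C²(η). Moreover C^i(η) = (1/N²) · ∑_{x ∈ V_N} j_η(x, x+e^i) for i = 1, 2, and C¹, C² are translational invariant. -/

import Mathlib

open Finset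

private lemma harmonic_const {N : ℕ} [NeZero N] (k : ZMod N × ZMod N → ℝ)
    (hk : ∀ z, k (z + (1,0)) + k (z - (1,0)) + k (z + (0,1)) + k (z - (0,1)) = 4 * k z) :
    ∀ z, k z = k 0 := by
  obtain ⟨z0, -, hz0⟩ := Finset.exists_max_image Finset.univ k ⟨0, Finset.mem_univ 0⟩
  have step : ∀ z, k z = k z0 → k (z + (1,0)) = k z0 ∧ k (z + (0,1)) = k z0 := by
    intro z hz
    have h1 := hz0 (z + (1,0)) (Finset.mem_univ _)
    have h2 := hz0 (z - (1,0)) (Finset.mem_univ _)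
    have h3 := hz0 (z + (0,1)) (Finset.mem_univ _)
    have h4 := hz0 (z - (0,1)) (Finset.mem_univ _)
    have h5 := hk z
    constructor <;> linarith
  have h1 : ∀ (n : ℕ) (z : ZMod N × ZMod N), k z = k z0 → k (z + ((n : ZMod N), 0)) = k z0 := by
    intro n
    induction n with
    | zero => intro z hz; simpa [show ((0:ZMod N),(0:ZMod N)) = 0 from rfl] using hz
    | succ n ih =>
      intro z hz
      have harg : z + (((n+1 : ℕ) : ZMod N), 0) = (z + ((n : ZMod N), 0)) + (1, 0) := by
        refine Prod.ext ?_ ?_ <;> push_cast <;> simp <;> ring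
      rw [harg]
      exact (step _ (ih z hz)).1
  have h2 : ∀ (n : ℕ) (z : ZMod N × ZMod N), k z = k z0 → k (z + (0, (n : ZMod N))) = k z0 := by
    intro n
    induction n with
    | zero => intro z hz; simpa [show ((0:ZMod N),(0:ZMod N)) = 0 from rfl] using hz
    | succ n ih =>
      intro z hz
      have harg : z + (0, ((n+1 : ℕ) : ZMod N)) = (z + (0, (n : ZMod N))) + (0, 1) := by
        refine Prod.ext ?_ ?_ <;> push_cast <;> simp <;> ring
      rw [harg]
      exact (step _ (ih z hz)).2
  have hall : ∀ w, k w = k z0 := by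
    intro w
    obtain ⟨n, hn⟩ := ZMod.natCast_rightInverse.surjective (w.1 - z0.1)
    obtain ⟨m, hm⟩ := ZMod.natCast_rightInverse.surjective (w.2 - z0.2)
    have hw : w = (z0 + ((n : ZMod N), 0)) + (0, (m : ZMod N)) := by
      rw [hn, hm]
      refine Prod.ext ?_ ?_ <;> simp <;> ring
    rw [hw]
    exact h2 m _ (h1 n z0 rfl)
  intro z; rw [hall z, hall 0]

private lemma exists_green (N : ℕ) [NeZero N] :
    ∃ α : ZMod N × ZMod N → ℝ, ∀ z,
      α (z + (1,0)) + α (z - (1,0)) + α (z + (0,1)) + α (z - (0,1)) - 4 * α z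
        = (if z = 0 then (1:ℝ) else 0) - 1/(N:ℝ)^2 := by
  classical
  have hNR : ((N:ℝ)) ≠ 0 := Nat.cast_ne_zero.mpr (NeZero.ne N)
  have hcard : Fintype.card (ZMod N × ZMod N) = N^2 := by
    simp [ZMod.card, sq]
  have hshift : ∀ (c : ZMod N × ZMod N) (k : ZMod N × ZMod N → ℝ),
      ∑ z, k (z + c) = ∑ z, k z :=
    fun c k => Fintype.sum_bijective (Equiv.addRight c) (Equiv.bijective _) _ _ (fun z => rfl)
  have hshift' : ∀ (c : ZMod N × ZMod N) (k : ZMod N × ZMod N → ℝ),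
      ∑ z, k (z - c) = ∑ z, k z :=
    fun c k => Fintype.sum_bijective (Equiv.subRight c) (Equiv.bijective _) _ _ (fun z => rfl)
  let sumL : ((ZMod N × ZMod N) → ℝ) →ₗ[ℝ] ℝ :=
    { toFun := fun k => ∑ z, k z
      map_add' := by intro a b; simp [Finset.sum_add_distrib]
      map_smul' := by intro c a; simp [Finset.mul_sum] }
  let Lap : ((ZMod N × ZMod N) → ℝ) →ₗ[ℝ] ((ZMod N × ZMod N) → ℝ) :=
    { toFun := fun k z => k (z + (1,0)) + k (z - (1,0)) + k (z + (0,1)) + k (z - (0,1)) - 4 * k z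
      map_add' := by intro a b; funext z; simp only [Pi.add_apply]; ring
      map_smul' := by intro c a; funext z; simp only [Pi.smul_apply, smul_eq_mul,
        RingHom.id_apply]; ring }
  have hLapV : ∀ k, Lap k ∈ LinearMap.ker sumL := by
    intro k
    simp only [LinearMap.mem_ker, sumL, Lap, LinearMap.coe_mk, AddHom.coe_mk]
    have hsplit : ∑ z, (k (z + (1,0)) + k (z - (1,0)) + k (z + (0,1)) + k (z - (0,1)) - 4 * k z)
        = (∑ z, k (z + (1,0))) + (∑ z, k (z - (1,0))) + (∑ z, k (z + (0,1)))
          + (∑ z, k (z - (0,1))) - ∑ z, 4 * k z := by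
      rw [Finset.sum_sub_distrib, Finset.sum_add_distrib, Finset.sum_add_distrib,
        Finset.sum_add_distrib]
    rw [hsplit, hshift, hshift, hshift', hshift', ← Finset.mul_sum]
    ring
  let L : (LinearMap.ker sumL) →ₗ[ℝ] (LinearMap.ker sumL) :=
    Lap.restrict (fun x _ => hLapV x)
  have hinj : Function.Injective L := by
    rw [injective_iff_map_eq_zero]
    intro x hx
    have hval : Lap (x : (ZMod N × ZMod N) → ℝ) = 0 := congrArg Subtype.val hx
    have hharm : ∀ z, (x : (ZMod N × ZMod N) → ℝ) (z + (1,0))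
        + (x : (ZMod N × ZMod N) → ℝ) (z - (1,0)) + (x : (ZMod N × ZMod N) → ℝ) (z + (0,1))
        + (x : (ZMod N × ZMod N) → ℝ) (z - (0,1)) = 4 * (x : (ZMod N × ZMod N) → ℝ) z := by
      intro z
      have := congrFun hval z
      simp only [Lap, LinearMap.coe_mk, AddHom.coe_mk, Pi.zero_apply] at this
      linarith
    have hconst := harmonic_const (x : (ZMod N × ZMod N) → ℝ) hharm
    have hsum : ∑ z, (x : (ZMod N × ZMod N) → ℝ) z = 0 := x.2
    have hzero : (x : (ZMod N × ZMod N) → ℝ) 0 = 0 := by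
      have : ∑ z, (x : (ZMod N × ZMod N) → ℝ) z
          = (N^2 : ℕ) * (x : (ZMod N × ZMod N) → ℝ) 0 := by
        rw [Finset.sum_congr rfl (fun z _ => hconst z), Finset.sum_const, Finset.card_univ,
          hcard, nsmul_eq_mul]
      rw [this] at hsum
      have hN2 : ((N^2 : ℕ) : ℝ) ≠ 0 := Nat.cast_ne_zero.mpr (pow_ne_zero _ (NeZero.ne N))
      exact (mul_eq_zero.mp hsum).resolve_left hN2
    apply Subtype.ext
    funext z
    simp [hconst z, hzero]
  have hsurj := LinearMap.injective_iff_surjective.mp hinj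
  have htV : (fun z : ZMod N × ZMod N => (if z = 0 then (1:ℝ) else 0) - 1/(N:ℝ)^2)
      ∈ LinearMap.ker sumL := by
    simp only [LinearMap.mem_ker, sumL, LinearMap.coe_mk, AddHom.coe_mk]
    rw [Finset.sum_sub_distrib]
    rw [Finset.sum_ite_eq' Finset.univ (0 : ZMod N × ZMod N) (fun _ => (1:ℝ))]
    rw [Finset.sum_const, Finset.card_univ, hcard, nsmul_eq_mul]
    simp only [Finset.mem_univ, if_true]
    push_cast
    field_simp
    norm_num
  obtain ⟨αV, hαV⟩ := hsurj ⟨_, htV⟩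
  refine ⟨(αV : (ZMod N × ZMod N) → ℝ), fun z => ?_⟩
  have := congrFun (congrArg Subtype.val hαV) z
  simpa [L, Lap, LinearMap.restrict_apply] using this

private def tact {N : ℕ} [NeZero N] {S : Type*} (k : ZMod N × ZMod N → ℝ)
    (f : ((ZMod N × ZMod N) → S) → ℝ) (η : (ZMod N × ZMod N) → S) : ℝ :=
  ∑ z, k z * f (fun w => η (w + z))

private lemma tact_shift {N : ℕ} [NeZero N] {S : Type*} (k : ZMod N × ZMod N → ℝ)
    (f : ((ZMod N × ZMod N) → S) → ℝ) (c : ZMod N × ZMod N) (η : (ZMod N × ZMod N) → S) :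
    tact k f (fun w => η (w + c)) = tact (fun z => k (z - c)) f η := by
  unfold tact
  refine Fintype.sum_bijective (Equiv.addRight c) (Equiv.bijective _) _ _ (fun z => ?_)
  simp only [Equiv.coe_addRight, add_sub_cancel_right]
  congr 1
  exact congrArg f (funext fun w => by rw [add_assoc])

private lemma tact_shift' {N : ℕ} [NeZero N] {S : Type*} (k : ZMod N × ZMod N → ℝ)
    (f : ((ZMod N × ZMod N) → S) → ℝ) (c : ZMod N × ZMod N) (η : (ZMod N × ZMod N) → S) :
    tact k f (fun w => η (w - c)) = tact (fun z => k (z + c)) f η := by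
  unfold tact
  refine Fintype.sum_bijective (Equiv.subRight c) (Equiv.bijective _) _ _ (fun z => ?_)
  simp only [Equiv.subRight_apply, sub_add_cancel]
  congr 1
  exact congrArg f (funext fun w => by rw [add_sub_assoc])




/-- **Functional Hodge decomposition in dimension two (existence part).**
Let `j` be a translational covariant discrete vector field on the two-dimensional
discrete torus `V_N = (ZMod N)²`: `j η x i` is the value `j_η(x, x+eⁱ⁺¹)` on the
oriented edge from `x` in direction `i` (`i = 0` for `e¹ = (1,0)`, `i = 1` for
`e² = (0,1)`), and covariance means `j_{τ_z η}(x+z, y+z) = j_η(x, y)` with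
`(τ_z η)(w) = η (w - z)`. Then there exist functions `h, g, C¹, C²` of the
configuration such that (with `τ_x f (η) = f (fun w => η (w + x))`, and the face
translations `τ_{𝔣⁺(x,x+e¹)} = τ_x`, `τ_{𝔣⁻(x,x+e¹)} = τ_{x-e²}`,
`τ_{𝔣⁺(x,x+e²)} = τ_{x-e¹}`, `τ_{𝔣⁻(x,x+e²)} = τ_x`):
`j_η(x,x+e¹) = τ_{x+e¹}h(η) - τ_x h(η) + τ_x g(η) - τ_{x-e²}g(η) + C¹(η)` and
`j_η(x,x+e²) = τ_{x+e²}h(η) - τ_x h(η) + τ_{x-e¹}g(η) - τ_x g(η) + C²(η)`.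
Moreover `Cⁱ(η) = (1/N²) ∑_x j_η(x, x+eⁱ)` and `C¹, C²` are translational
invariant. -/
theorem stmt_3 {N : ℕ} [NeZero N] (hN : 3 ≤ N) {S : Type*}
    (j : ((ZMod N × ZMod N) → S) → (ZMod N × ZMod N) → Fin 2 → ℝ)
    (hcov : ∀ (η : (ZMod N × ZMod N) → S) (z x : ZMod N × ZMod N) (i : Fin 2),
      j (fun w => η (w - z)) (x + z) i = j η x i) :
    ∃ h g C1 C2 : ((ZMod N × ZMod N) → S) → ℝ,
      (∀ (η : (ZMod N × ZMod N) → S) (x : ZMod N × ZMod N),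
        j η x 0 = h (fun w => η (w + (x + (1, 0)))) - h (fun w => η (w + x))
          + g (fun w => η (w + x)) - g (fun w => η (w + (x - (0, 1)))) + C1 η) ∧
      (∀ (η : (ZMod N × ZMod N) → S) (x : ZMod N × ZMod N),
        j η x 1 = h (fun w => η (w + (x + (0, 1)))) - h (fun w => η (w + x))
          + g (fun w => η (w + (x - (1, 0)))) - g (fun w => η (w + x)) + C2 η) ∧
      (∀ η : (ZMod N × ZMod N) → S,
        C1 η = (1 / (N : ℝ) ^ 2) * ∑ x : ZMod N × ZMod N, j η x 0) ∧
      (∀ η : (ZMod N × ZMod N) → S,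
        C2 η = (1 / (N : ℝ) ^ 2) * ∑ x : ZMod N × ZMod N, j η x 1) ∧
      (∀ (η : (ZMod N × ZMod N) → S) (z : ZMod N × ZMod N),
        C1 (fun w => η (w - z)) = C1 η) ∧
      (∀ (η : (ZMod N × ZMod N) → S) (z : ZMod N × ZMod N),
        C2 (fun w => η (w - z)) = C2 η) := by
  classical
  obtain ⟨α, hα⟩ := exists_green N
  have hNR : ((N:ℝ)) ≠ 0 := Nat.cast_ne_zero.mpr (NeZero.ne N)
  have hcard : Fintype.card (ZMod N × ZMod N) = N^2 := by
    simp [ZMod.card, sq]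
  have hrepr : ∀ (η : (ZMod N × ZMod N) → S) (x : ZMod N × ZMod N) (i : Fin 2),
      j η x i = j (fun w => η (w + x)) 0 i := by
    intro η x i
    have h := hcov (fun w => η (w + x)) x 0 i
    simp only [zero_add] at h
    rw [← h]
    congr 1
    funext w
    rw [sub_add_cancel]
  have hCsum : ∀ (η : (ZMod N × ZMod N) → S) (z : ZMod N × ZMod N) (i : Fin 2),
      (∑ x, j (fun w => η (w - z)) x i) = ∑ x, j η x i := by
    intro η z i
    calc (∑ x, j (fun w => η (w - z)) x i)
        = ∑ x, j (fun w => η (w - z)) (x + z) i :=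
          (Fintype.sum_bijective (Equiv.addRight z) (Equiv.bijective _)
            (fun x => j (fun w => η (w - z)) (x + z) i)
            (fun x => j (fun w => η (w - z)) x i) (fun x => rfl)).symm
      _ = ∑ x, j η x i := Finset.sum_congr rfl (fun x _ => hcov η z x i)
  have hCsum' : ∀ (η : (ZMod N × ZMod N) → S) (z : ZMod N × ZMod N) (i : Fin 2),
      (∑ x, j (fun w => η (w + z)) x i) = ∑ x, j η x i := by
    intro η z i
    have := hCsum η (-z) i
    simpa [sub_neg_eq_add] using this
  set u : ((ZMod N × ZMod N) → S) → ℝ :=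
    fun ξ => j ξ 0 0 - 1 / (N:ℝ)^2 * ∑ x, j ξ x 0 with hu_def
  set v : ((ZMod N × ZMod N) → S) → ℝ :=
    fun ξ => j ξ 0 1 - 1 / (N:ℝ)^2 * ∑ x, j ξ x 1 with hv_def
  set A1 : ZMod N × ZMod N → ℝ := fun z => α z - α (z + (1,0)) with hA1
  set A2 : ZMod N × ZMod N → ℝ := fun z => α z - α (z + (0,1)) with hA2
  set B1 : ZMod N × ZMod N → ℝ := fun z => α (z - (0,1)) - α z with hB1
  set B2 : ZMod N × ZMod N → ℝ := fun z => α z - α (z - (1,0)) with hB2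
  have hsum0 : ∀ (i : Fin 2) (ξ : (ZMod N × ZMod N) → S),
      ∑ z, (j (fun w => ξ (w + z)) 0 i - 1 / (N:ℝ)^2 * ∑ x, j (fun w => ξ (w + z)) x i) = 0 := by
    intro i ξ
    rw [Finset.sum_sub_distrib]
    have e1 : ∑ z : ZMod N × ZMod N, j (fun w => ξ (w + z)) 0 i = ∑ z, j ξ z i :=
      Finset.sum_congr rfl (fun z _ => (hrepr ξ z i).symm)
    have e2 : ∑ z : ZMod N × ZMod N, 1 / (N:ℝ)^2 * ∑ x, j (fun w => ξ (w + z)) x i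
        = ∑ _z : ZMod N × ZMod N, 1 / (N:ℝ)^2 * ∑ x, j ξ x i :=
      Finset.sum_congr rfl (fun z _ => by rw [hCsum' ξ z i])
    rw [e1, e2, Finset.sum_const, Finset.card_univ, hcard, nsmul_eq_mul]
    have : ((N^2 : ℕ) : ℝ) * (1 / (N:ℝ)^2 * ∑ x, j ξ x i) = ∑ x, j ξ x i := by
      push_cast
      field_simp
    rw [this, sub_self]
  have hu0 : ∀ ξ : (ZMod N × ZMod N) → S, ∑ z, u (fun w => ξ (w + z)) = 0 := by
    intro ξ
    simp only [hu_def]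
    exact hsum0 0 ξ
  have hv0 : ∀ ξ : (ZMod N × ZMod N) → S, ∑ z, v (fun w => ξ (w + z)) = 0 := by
    intro ξ
    simp only [hv_def]
    exact hsum0 1 ξ
  -- pointwise kernel identities
  have hk1u : ∀ z : ZMod N × ZMod N,
      A1 (z - (1,0)) - A1 z + B1 z - B1 (z + (0,1))
        = (if z = 0 then (1:ℝ) else 0) - 1/(N:ℝ)^2 := by
    intro z
    have h0 := hα z
    simp only [hA1, hB1, sub_add_cancel, add_sub_cancel_right]
    linarith
  have hk1v : ∀ z : ZMod N × ZMod N,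
      A2 (z - (1,0)) - A2 z + B2 z - B2 (z + (0,1)) = 0 := by
    intro z
    simp only [hA2, hB2]
    rw [show z - (1,0) + (0,1) = z + (0,1) - (1,0) by abel]
    ring
  have hk2u : ∀ z : ZMod N × ZMod N,
      A1 (z - (0,1)) - A1 z + B1 (z + (1,0)) - B1 z = 0 := by
    intro z
    simp only [hA1, hB1]
    rw [show z - (0,1) + (1,0) = z + (1,0) - (0,1) by abel]
    ring
  have hk2v : ∀ z : ZMod N × ZMod N,
      A2 (z - (0,1)) - A2 z + B2 (z + (1,0)) - B2 z
        = (if z = 0 then (1:ℝ) else 0) - 1/(N:ℝ)^2 := by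
    intro z
    have h0 := hα z
    simp only [hA2, hB2, sub_add_cancel, add_sub_cancel_right]
    linarith
  -- evaluation of the "delta minus average" kernel
  have heval : ∀ (f : ((ZMod N × ZMod N) → S) → ℝ)
      (hf : ∀ ξ : (ZMod N × ZMod N) → S, ∑ z, f (fun w => ξ (w + z)) = 0)
      (ξ : (ZMod N × ZMod N) → S),
      ∑ z, ((if z = (0 : ZMod N × ZMod N) then (1:ℝ) else 0) - 1/(N:ℝ)^2)
        * f (fun w => ξ (w + z)) = f ξ := by
    intro f hf ξ
    have hsplit : ∑ z, ((if z = (0 : ZMod N × ZMod N) then (1:ℝ) else 0) - 1/(N:ℝ)^2)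
          * f (fun w => ξ (w + z))
        = (∑ z, (if z = (0 : ZMod N × ZMod N) then (1:ℝ) else 0) * f (fun w => ξ (w + z)))
          - ∑ z, 1/(N:ℝ)^2 * f (fun w => ξ (w + z)) := by
      rw [← Finset.sum_sub_distrib]
      exact Finset.sum_congr rfl (fun z _ => by ring)
    rw [hsplit]
    have h1 : ∑ z, (if z = (0 : ZMod N × ZMod N) then (1:ℝ) else 0) * f (fun w => ξ (w + z))
        = f ξ := by
      have hpt : ∀ z : ZMod N × ZMod N, (if z = 0 then (1:ℝ) else 0) * f (fun w => ξ (w + z))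
          = if z = 0 then f (fun w => ξ (w + z)) else 0 := by
        intro z; split <;> simp
      rw [Finset.sum_congr rfl (fun z _ => hpt z),
        Finset.sum_ite_eq' Finset.univ (0 : ZMod N × ZMod N)
          (fun z => f (fun w => ξ (w + z)))]
      simp
    have h2 : ∑ z, 1/(N:ℝ)^2 * f (fun w => ξ (w + z)) = 0 := by
      rw [← Finset.mul_sum, hf ξ, mul_zero]
    rw [h1, h2, sub_zero]
  -- main identities in terms of a single configuration
  have main1 : ∀ ξ : (ZMod N × ZMod N) → S,
      j ξ 0 0 = (tact A1 u (fun w => ξ (w + (1,0))) + tact A2 v (fun w => ξ (w + (1,0))))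
        - (tact A1 u ξ + tact A2 v ξ) + (tact B1 u ξ + tact B2 v ξ)
        - (tact B1 u (fun w => ξ (w - (0,1))) + tact B2 v (fun w => ξ (w - (0,1))))
        + 1 / (N:ℝ)^2 * ∑ y, j ξ y 0 := by
    intro ξ
    rw [tact_shift A1 u (1,0) ξ, tact_shift A2 v (1,0) ξ,
      tact_shift' B1 u (0,1) ξ, tact_shift' B2 v (0,1) ξ]
    have key_u : tact (fun z => A1 (z - (1,0))) u ξ - tact A1 u ξ + tact B1 u ξ
        - tact (fun z => B1 (z + (0,1))) u ξ = u ξ := by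
      have hc : tact (fun z => A1 (z - (1,0))) u ξ - tact A1 u ξ + tact B1 u ξ
          - tact (fun z => B1 (z + (0,1))) u ξ
          = ∑ z, ((if z = (0 : ZMod N × ZMod N) then (1:ℝ) else 0) - 1/(N:ℝ)^2)
            * u (fun w => ξ (w + z)) := by
        simp only [tact]
        rw [← Finset.sum_sub_distrib, ← Finset.sum_add_distrib, ← Finset.sum_sub_distrib]
        refine Finset.sum_congr rfl (fun z _ => ?_)
        rw [← hk1u z]
        ring
      rw [hc, heval u hu0 ξ]
    have key_v : tact (fun z => A2 (z - (1,0))) v ξ - tact A2 v ξ + tact B2 v ξ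
        - tact (fun z => B2 (z + (0,1))) v ξ = 0 := by
      simp only [tact]
      rw [← Finset.sum_sub_distrib, ← Finset.sum_add_distrib, ← Finset.sum_sub_distrib]
      refine Finset.sum_eq_zero (fun z _ => ?_)
      rw [show A2 (z - (1,0)) * v (fun w => ξ (w + z)) - A2 z * v (fun w => ξ (w + z))
          + B2 z * v (fun w => ξ (w + z)) - B2 (z + (0,1)) * v (fun w => ξ (w + z))
          = (A2 (z - (1,0)) - A2 z + B2 z - B2 (z + (0,1))) * v (fun w => ξ (w + z)) by ring,
        hk1v z, zero_mul]
    have huξ : u ξ = j ξ 0 0 - 1 / (N:ℝ)^2 * ∑ y, j ξ y 0 := by rw [hu_def]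
    linear_combination -key_u - key_v - huξ
  have main2 : ∀ ξ : (ZMod N × ZMod N) → S,
      j ξ 0 1 = (tact A1 u (fun w => ξ (w + (0,1))) + tact A2 v (fun w => ξ (w + (0,1))))
        - (tact A1 u ξ + tact A2 v ξ)
        + (tact B1 u (fun w => ξ (w - (1,0))) + tact B2 v (fun w => ξ (w - (1,0))))
        - (tact B1 u ξ + tact B2 v ξ)
        + 1 / (N:ℝ)^2 * ∑ y, j ξ y 1 := by
    intro ξ
    rw [tact_shift A1 u (0,1) ξ, tact_shift A2 v (0,1) ξ,
      tact_shift' B1 u (1,0) ξ, tact_shift' B2 v (1,0) ξ]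
    have key_u : tact (fun z => A1 (z - (0,1))) u ξ - tact A1 u ξ
        + tact (fun z => B1 (z + (1,0))) u ξ - tact B1 u ξ = 0 := by
      simp only [tact]
      rw [← Finset.sum_sub_distrib, ← Finset.sum_add_distrib, ← Finset.sum_sub_distrib]
      refine Finset.sum_eq_zero (fun z _ => ?_)
      rw [show A1 (z - (0,1)) * u (fun w => ξ (w + z)) - A1 z * u (fun w => ξ (w + z))
          + B1 (z + (1,0)) * u (fun w => ξ (w + z)) - B1 z * u (fun w => ξ (w + z))
          = (A1 (z - (0,1)) - A1 z + B1 (z + (1,0)) - B1 z) * u (fun w => ξ (w + z)) by ring,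
        hk2u z, zero_mul]
    have key_v : tact (fun z => A2 (z - (0,1))) v ξ - tact A2 v ξ
        + tact (fun z => B2 (z + (1,0))) v ξ - tact B2 v ξ = v ξ := by
      have hc : tact (fun z => A2 (z - (0,1))) v ξ - tact A2 v ξ
          + tact (fun z => B2 (z + (1,0))) v ξ - tact B2 v ξ
          = ∑ z, ((if z = (0 : ZMod N × ZMod N) then (1:ℝ) else 0) - 1/(N:ℝ)^2)
            * v (fun w => ξ (w + z)) := by
        simp only [tact]
        rw [← Finset.sum_sub_distrib, ← Finset.sum_add_distrib, ← Finset.sum_sub_distrib]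
        refine Finset.sum_congr rfl (fun z _ => ?_)
        rw [← hk2v z]
        ring
      rw [hc, heval v hv0 ξ]
    have hvξ : v ξ = j ξ 0 1 - 1 / (N:ℝ)^2 * ∑ y, j ξ y 1 := by rw [hv_def]
    linear_combination -key_u - key_v - hvξ
  refine ⟨fun η => tact A1 u η + tact A2 v η, fun η => tact B1 u η + tact B2 v η,
    fun η => 1 / (N:ℝ)^2 * ∑ x, j η x 0, fun η => 1 / (N:ℝ)^2 * ∑ x, j η x 1,
    ?_, ?_, fun _ => rfl, fun _ => rfl,
    fun η z => by
      show 1 / (N:ℝ)^2 * ∑ x, j (fun w => η (w - z)) x 0 = 1 / (N:ℝ)^2 * ∑ x, j η x 0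
      rw [hCsum η z 0],
    fun η z => by
      show 1 / (N:ℝ)^2 * ∑ x, j (fun w => η (w - z)) x 1 = 1 / (N:ℝ)^2 * ∑ x, j η x 1
      rw [hCsum η z 1]⟩
  · intro η x
    show j η x 0
        = (tact A1 u (fun w => η (w + (x + (1,0)))) + tact A2 v (fun w => η (w + (x + (1,0)))))
          - (tact A1 u (fun w => η (w + x)) + tact A2 v (fun w => η (w + x)))
          + (tact B1 u (fun w => η (w + x)) + tact B2 v (fun w => η (w + x)))
          - (tact B1 u (fun w => η (w + (x - (0,1)))) + tact B2 v (fun w => η (w + (x - (0,1)))))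
          + 1 / (N:ℝ)^2 * ∑ y, j η y 0
    rw [hrepr η x 0,
      show (fun w => η (w + (x + (1,0)))) = (fun w : ZMod N × ZMod N => η (w + (1,0) + x)) from
        funext fun w => by rw [show w + (x + (1,0)) = w + (1,0) + x by abel],
      show (fun w => η (w + (x - (0,1)))) = (fun w : ZMod N × ZMod N => η (w - (0,1) + x)) from
        funext fun w => by rw [show w + (x - (0,1)) = w - (0,1) + x by abel],
      show (1 / (N:ℝ)^2 * ∑ y, j η y 0) = 1 / (N:ℝ)^2 * ∑ y, j (fun w => η (w + x)) y 0 from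
        by rw [hCsum' η x 0]]
    exact main1 (fun w => η (w + x))
  · intro η x
    show j η x 1
        = (tact A1 u (fun w => η (w + (x + (0,1)))) + tact A2 v (fun w => η (w + (x + (0,1)))))
          - (tact A1 u (fun w => η (w + x)) + tact A2 v (fun w => η (w + x)))
          + (tact B1 u (fun w => η (w + (x - (1,0)))) + tact B2 v (fun w => η (w + (x - (1,0)))))
          - (tact B1 u (fun w => η (w + x)) + tact B2 v (fun w => η (w + x)))
          + 1 / (N:ℝ)^2 * ∑ y, j η y 1
    rw [hrepr η x 1,
      show (fun w => η (w + (x + (0,1)))) = (fun w : ZMod N × ZMod N => η (w + (0,1) + x)) from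
        funext fun w => by rw [show w + (x + (0,1)) = w + (0,1) + x by abel],
      show (fun w => η (w + (x - (1,0)))) = (fun w : ZMod N × ZMod N => η (w - (1,0) + x)) from
        funext fun w => by rw [show w + (x - (1,0)) = w - (1,0) + x by abel],
      show (1 / (N:ℝ)^2 * ∑ y, j η y 1) = 1 / (N:ℝ)^2 * ∑ y, j (fun w => η (w + x)) y 1 from
        by rw [hCsum' η x 1]]
    exact main2 (fun w => η (w + x))
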